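/- Let Φ be an irreducible crystallographic root system with lacing number ℓ = max{(α,α)/(β,β) : α,β ∈ Φ}. A root γ = Σ_{α∈Π} c_α α is long if and only if, for every short simple root α, the coefficient c_α is divisible by ℓ. -/

import Mathlib

open scoped RealInnerProductSpace
attribute [local instance] Classical.propDecidable

variable {E : Type*} [NormedAddCommGroup E] [InnerProductSpace ℝ E] [FiniteDimensional ℝ E]

/-- A finite reduced crystallographic root system spanning `E`. -/
structure IsRootSystem (Φ : Finset E) : Prop where
  nonzero : ∀ γ ∈ Φ, γ ≠ (0 : E)
  span_top : Submodule.span ℝ (Φ : Set E) = ⊤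
  reduced : ∀ γ ∈ Φ, ∀ t : ℝ, t • γ ∈ Φ → t = 1 ∨ t = -1
  reflect : ∀ γ ∈ Φ, ∀ δ ∈ Φ, δ - (2 * ⟪δ, γ⟫ / ⟪γ, γ⟫) • γ ∈ Φ
  cry : ∀ γ ∈ Φ, ∀ δ ∈ Φ, ∃ n : ℤ, 2 * ⟪δ, γ⟫ / ⟪γ, γ⟫ = (n : ℝ)

/-- `Δ` is a simple system (base) for `Φ`, and `c γ a` is the coordinate of `γ`
on the simple root `a`. -/
structure IsBase (Φ Δ : Finset E) (c : E → E → ℝ) : Prop where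
  subset : Δ ⊆ Φ
  indep : LinearIndependent ℝ (fun x : (Δ : Set E) => (x : E))
  repr : ∀ γ ∈ Φ, γ = ∑ a ∈ Δ, c γ a • a
  int : ∀ γ ∈ Φ, ∀ a ∈ Δ, ∃ n : ℤ, c γ a = (n : ℝ)
  sign : ∀ γ ∈ Φ, (∀ a ∈ Δ, 0 ≤ c γ a) ∨ (∀ a ∈ Δ, c γ a ≤ 0)

/-- Irreducibility: no splitting into two nonempty mutually orthogonal parts. -/
def IsIrredSys (Φ : Finset E) : Prop :=
  ∀ s : Set E, s ⊆ (Φ : Set E) → (∀ x ∈ s, ∀ y ∈ (Φ : Set E) \ s, ⟪x, y⟫ = 0) →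
    s = ∅ ∨ s = (Φ : Set E)

namespace Stmt11Helpers

lemma root_inner_pos {Φ : Finset E} (hΦ : IsRootSystem Φ) {x : E} (hx : x ∈ Φ) :
    0 < ⟪x, x⟫ := by
  have hx0 : x ≠ 0 := hΦ.nonzero x hx
  rw [real_inner_self_eq_norm_mul_norm x]
  have h : 0 < ‖x‖ := norm_pos_iff.mpr hx0
  positivity

lemma reflect_inner_self {x y : E} (hx : ⟪x, x⟫ ≠ 0) :
    ⟪y - (2 * ⟪y, x⟫ / ⟪x, x⟫) • x, y - (2 * ⟪y, x⟫ / ⟪x, x⟫) • x⟫ = ⟪y, y⟫ := by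
  have h1 : ∀ k : ℝ, ⟪y - k • x, y - k • x⟫ = ⟪y, y⟫ - 2 * k * ⟪y, x⟫ + k ^ 2 * ⟪x, x⟫ := by
    intro k
    simp only [inner_sub_left, inner_sub_right, real_inner_smul_left, real_inner_smul_right]
    rw [real_inner_comm x y]
    ring
  rw [h1]
  field_simp
  ring

lemma neg_mem {Φ : Finset E} (hΦ : IsRootSystem Φ) {x : E} (hx : x ∈ Φ) : -x ∈ Φ := by
  have h := hΦ.reflect x hx x hx
  have hx0 : ⟪x, x⟫ ≠ 0 := ne_of_gt (root_inner_pos hΦ hx)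
  have h2 : 2 * ⟪x, x⟫ / ⟪x, x⟫ = (2 : ℝ) := by field_simp
  rw [h2] at h
  have h3 : x - (2 : ℝ) • x = -x := by
    rw [two_smul]; abel
  rwa [h3] at h

lemma smul_root_eq {Φ : Finset E} (hΦ : IsRootSystem Φ) {x y : E} (hx : x ∈ Φ) (hy : y ∈ Φ)
    {s : ℝ} (h : s • y = x) : x = y ∨ x = -y := by
  have hmem : s • y ∈ Φ := h ▸ hx
  rcases hΦ.reduced y hy s hmem with rfl | rfl
  · left; rw [← h, one_smul]
  · right; rw [← h, neg_smul, one_smul]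

lemma inner_lt {Φ : Finset E} (hΦ : IsRootSystem Φ) {x y : E} (hx : x ∈ Φ) (hy : y ∈ Φ)
    (h1 : x ≠ y) : ⟪x, y⟫ < ‖x‖ * ‖y‖ := by
  have hx0 : x ≠ 0 := hΦ.nonzero x hx
  have hy0 : y ≠ 0 := hΦ.nonzero y hy
  have hxn : (0 : ℝ) < ‖x‖ := norm_pos_iff.mpr hx0
  have hyn : (0 : ℝ) < ‖y‖ := norm_pos_iff.mpr hy0
  apply inner_lt_norm_mul_iff_real.mpr
  intro heq
  have hs : (‖y‖⁻¹ * ‖x‖) • y = x := by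
    rw [← smul_smul, ← heq, smul_smul, inv_mul_cancel₀ (ne_of_gt hyn), one_smul]
  rcases smul_root_eq hΦ hx hy hs with h | h
  · exact h1 h
  · have hneg : (‖y‖⁻¹ * ‖x‖) • y = (-1 : ℝ) • y := by rw [hs, h, neg_one_smul]
    have := smul_left_injective ℝ hy0 hneg
    nlinarith [mul_pos (inv_pos.mpr hyn) hxn]

lemma abs_inner_lt {Φ : Finset E} (hΦ : IsRootSystem Φ) {x y : E} (hx : x ∈ Φ) (hy : y ∈ Φ)
    (h1 : x ≠ y) (h2 : x ≠ -y) : |⟪x, y⟫| < ‖x‖ * ‖y‖ := by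
  rw [abs_lt]
  constructor
  · have h3 : -x ≠ y := by
      intro h; apply h2; rw [← h, neg_neg]
    have := inner_lt hΦ (neg_mem hΦ hx) hy h3
    rw [inner_neg_left, norm_neg] at this
    linarith
  · exact inner_lt hΦ hx hy h1

lemma n_mul_n_lt_four {Φ : Finset E} (hΦ : IsRootSystem Φ) {x y : E} (hx : x ∈ Φ) (hy : y ∈ Φ)
    (h1 : x ≠ y) (h2 : x ≠ -y) :
    (2 * ⟪x, y⟫ / ⟪y, y⟫) * (2 * ⟪y, x⟫ / ⟪x, x⟫) < 4 := by
  have hxx : x ≠ 0 := hΦ.nonzero x hx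
  have hyy : y ≠ 0 := hΦ.nonzero y hy
  have hxn : (0 : ℝ) < ‖x‖ := norm_pos_iff.mpr hxx
  have hyn : (0 : ℝ) < ‖y‖ := norm_pos_iff.mpr hyy
  have habs := abs_inner_lt hΦ hx hy h1 h2
  rw [abs_lt] at habs
  rw [real_inner_comm x y, real_inner_self_eq_norm_mul_norm x, real_inner_self_eq_norm_mul_norm y,
    div_mul_div_comm, div_lt_iff₀ (by positivity)]
  nlinarith [habs.1, habs.2]

lemma ratio {Φ : Finset E} (hΦ : IsRootSystem Φ) {x y : E} (hx : x ∈ Φ) (hy : y ∈ Φ)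
    (hlt : ⟪y, y⟫ < ⟪x, x⟫) (hne : ⟪x, y⟫ ≠ 0) :
    ∃ p : ℤ, (p = 2 ∨ p = 3) ∧ ⟪x, x⟫ = (p : ℝ) * ⟪y, y⟫ ∧
      (2 * ⟪x, y⟫ / ⟪y, y⟫ = (p : ℝ) ∨ 2 * ⟪x, y⟫ / ⟪y, y⟫ = -(p : ℝ)) := by
  have hxx := root_inner_pos hΦ hx
  have hyy := root_inner_pos hΦ hy
  have h1 : x ≠ y := by rintro rfl; exact lt_irrefl _ hlt
  have h2 : x ≠ -y := by
    rintro rfl; rw [inner_neg_neg] at hlt; exact lt_irrefl _ hlt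
  obtain ⟨u, hu⟩ := hΦ.cry y hy x hx
  obtain ⟨v, hv⟩ := hΦ.cry x hx y hy
  have hprod4 := n_mul_n_lt_four hΦ hx hy h1 h2
  have hprodpos : 0 < (2 * ⟪x, y⟫ / ⟪y, y⟫) * (2 * ⟪y, x⟫ / ⟪x, x⟫) := by
    rw [real_inner_comm x y]
    have hA : 0 < ⟪x, y⟫ * ⟪x, y⟫ := mul_self_pos.mpr hne
    have hrw : (2 * ⟪x, y⟫ / ⟪y, y⟫) * (2 * ⟪x, y⟫ / ⟪x, x⟫)
        = 4 * (⟪x, y⟫ * ⟪x, y⟫) / (⟪y, y⟫ * ⟪x, x⟫) := by ring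
    rw [hrw]
    positivity
  rw [hu, hv] at hprod4 hprodpos
  have hprod1 : 1 ≤ u * v := by
    have : (0 : ℝ) < ((u * v : ℤ) : ℝ) := by push_cast; exact hprodpos
    have h0 : 0 < u * v := by exact_mod_cast this
    omega
  have hprod3 : u * v ≤ 3 := by
    have : ((u * v : ℤ) : ℝ) < 4 := by push_cast; exact hprod4
    have h4 : u * v < 4 := by exact_mod_cast this
    omega
  have hv0 : v ≠ 0 := by
    rintro rfl; omega
  have hu0 : u ≠ 0 := by
    rintro rfl; omega
  have hid : (u : ℝ) * ⟪y, y⟫ = (v : ℝ) * ⟪x, x⟫ := by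
    have hu' : 2 * ⟪x, y⟫ = (u : ℝ) * ⟪y, y⟫ := by
      rw [← hu, div_mul_cancel₀]; exact ne_of_gt hyy
    have hv' : 2 * ⟪y, x⟫ = (v : ℝ) * ⟪x, x⟫ := by
      rw [← hv, div_mul_cancel₀]; exact ne_of_gt hxx
    rw [← hu', ← hv', real_inner_comm y x]
  have habs : |v| < |u| := by
    have h1' : |(u : ℝ)| * ⟪y, y⟫ = |(v : ℝ)| * ⟪x, x⟫ := by
      have := congrArg abs hid
      rwa [abs_mul, abs_mul, abs_of_pos hyy, abs_of_pos hxx] at this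
    have h2' : |(v : ℝ)| < |(u : ℝ)| := by
      by_contra hcon
      push_neg at hcon
      have hvpos : 0 < |(v : ℝ)| := abs_pos.mpr (by exact_mod_cast hv0)
      nlinarith
    have h3' : |(v : ℝ)| = ((|v| : ℤ) : ℝ) := by push_cast; ring
    have h4' : |(u : ℝ)| = ((|u| : ℤ) : ℝ) := by push_cast; ring
    rw [h3', h4'] at h2'
    exact_mod_cast h2'
  have hv1 : v = 1 ∨ v = -1 := by
    have hprodpos' : 0 < u * v := by omega
    have habs2 : |u| * |v| = u * v := by
      rw [← abs_mul, abs_of_pos hprodpos']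
    have hva : 1 ≤ |v| := by
      have := abs_pos.mpr hv0
      omega
    have hua : |v| + 1 ≤ |u| := by omega
    have h5 : (|v| + 1) * |v| ≤ 3 := by
      nlinarith [mul_le_mul_of_nonneg_right hua (abs_nonneg v)]
    have h6 : |v| ≤ 1 := by
      by_contra hcc
      push_neg at hcc
      nlinarith [mul_le_mul_of_nonneg_right (by linarith : (3:ℤ) ≤ |v| + 1) (by linarith : (0:ℤ) ≤ |v|)]
    have h7 : |v| = 1 := le_antisymm h6 hva
    exact (abs_eq (by norm_num)).mp h7
  have hxxp : ⟪x, x⟫ = ((u * v : ℤ) : ℝ) * ⟪y, y⟫ := by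
    rcases hv1 with rfl | rfl
    · push_cast at hid ⊢
      linarith
    · push_cast at hid ⊢
      linarith
  have hp1 : 1 ≤ u * v := hprod1
  have hpne1 : u * v ≠ 1 := by
    intro hone
    rw [hone] at hxxp
    push_cast at hxxp
    linarith
  refine ⟨u * v, by omega, hxxp, ?_⟩
  rcases hv1 with rfl | rfl
  · left; rw [hu]; push_cast; ring
  · right; rw [hu]; push_cast; ring

lemma inner_vanish {s : Set E} {w : E} (h : ∀ z ∈ s, ⟪z, w⟫ = 0) :
    ∀ u ∈ Submodule.span ℝ s, ⟪u, w⟫ = 0 := by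
  intro u hu
  induction hu using Submodule.span_induction with
  | mem z hz => exact h z hz
  | zero => exact inner_zero_left w
  | add x y hx hy ihx ihy => rw [inner_add_left, ihx, ihy, add_zero]
  | smul t x hx ihx => rw [real_inner_smul_left, ihx, mul_zero]

lemma orbit {Φ : Finset E} (hΦ : IsRootSystem Φ) (hirr : IsIrredSys Φ)
    {α β : E} (hα : α ∈ Φ) (hβ : β ∈ Φ) :
    ∃ z ∈ Φ, ⟪z, z⟫ = ⟪α, α⟫ ∧ ⟪z, β⟫ ≠ 0 := by
  classical
  let R : E → E → Prop := fun u w => ∃ d ∈ Φ, w = u - (2 * ⟪u, d⟫ / ⟪d, d⟫) • d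
  let O : Set E := {z | Relation.ReflTransGen R α z}
  have hOa : α ∈ O := Relation.ReflTransGen.refl
  have hOsub : ∀ z ∈ O, z ∈ Φ ∧ ⟪z, z⟫ = ⟪α, α⟫ := by
    intro z hz
    induction hz with
    | refl => exact ⟨hα, rfl⟩
    | tail hbc hstep ih =>
      obtain ⟨d, hd, rfl⟩ := hstep
      obtain ⟨hbΦ, hblen⟩ := ih
      refine ⟨hΦ.reflect d hd _ hbΦ, ?_⟩
      rw [reflect_inner_self (ne_of_gt (root_inner_pos hΦ hd))]
      exact hblen
  set U := Submodule.span ℝ O with hU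
  have hperp : ∀ δ ∈ Φ, (δ : E) ∉ U → ∀ u ∈ U, ⟪u, δ⟫ = 0 := by
    intro δ hδ hδU
    have hzero : ∀ z ∈ O, ⟪z, δ⟫ = 0 := by
      intro z hz
      by_contra hzd
      have hz' : z - (2 * ⟪z, δ⟫ / ⟪δ, δ⟫) • δ ∈ O :=
        Relation.ReflTransGen.tail hz ⟨δ, hδ, rfl⟩
      have hδδ : ⟪δ, δ⟫ ≠ 0 := ne_of_gt (root_inner_pos hΦ hδ)
      have hk : (2 * ⟪z, δ⟫ / ⟪δ, δ⟫) ≠ 0 := div_ne_zero (by intro h; apply hzd; linarith) hδδ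
      have hδeq : δ = (2 * ⟪z, δ⟫ / ⟪δ, δ⟫)⁻¹ • (z - (z - (2 * ⟪z, δ⟫ / ⟪δ, δ⟫) • δ)) := by
        rw [sub_sub_cancel, smul_smul, inv_mul_cancel₀ hk, one_smul]
      apply hδU
      rw [hδeq]
      exact Submodule.smul_mem _ _
        (Submodule.sub_mem _ (Submodule.subset_span hz) (Submodule.subset_span hz'))
    exact inner_vanish hzero
  have hsub : {x : E | x ∈ Φ ∧ (x : E) ∈ U} ⊆ (Φ : Set E) := fun x hx => hx.1
  have horth : ∀ x ∈ {x : E | x ∈ Φ ∧ (x : E) ∈ U},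
      ∀ y ∈ (Φ : Set E) \ {x : E | x ∈ Φ ∧ (x : E) ∈ U}, ⟪x, y⟫ = 0 := by
    intro x hx y hy
    have hyU : y ∉ U := fun h => hy.2 ⟨hy.1, h⟩
    exact hperp y hy.1 hyU x hx.2
  rcases hirr _ hsub horth with hemp | hall
  · exfalso
    have : α ∈ {x : E | x ∈ Φ ∧ (x : E) ∈ U} := ⟨hα, Submodule.subset_span hOa⟩
    rw [hemp] at this
    exact this
  · by_contra hcon
    push_neg at hcon
    have hzero : ∀ z ∈ O, ⟪z, β⟫ = 0 := by
      intro z hz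
      obtain ⟨hzΦ, hzlen⟩ := hOsub z hz
      exact hcon z hzΦ hzlen
    have hβU : (β : E) ∈ U := by
      have : β ∈ {x : E | x ∈ Φ ∧ (x : E) ∈ U} := by rw [hall]; exact hβ
      exact this.2
    have := inner_vanish hzero β hβU
    exact ne_of_gt (root_inner_pos hΦ hβ) this

lemma coord_zero {Φ Δ : Finset E} {c : E → E → ℝ} (hB : IsBase Φ Δ c) (f : E → ℝ)
    (h : ∑ a ∈ Δ, f a • a = 0) : ∀ a ∈ Δ, f a = 0 := by
  classical
  intro a ha
  have hsum : (∑ i : (Δ : Set E), f (i : E) • (i : E)) = 0 := by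
    rw [Finset.sum_finset_coe (fun a => f a • a) Δ]
    exact h
  exact Fintype.linearIndependent_iff.mp hB.indep (fun i : (Δ : Set E) => f i) hsum ⟨a, ha⟩

lemma coord_unique {Φ Δ : Finset E} {c : E → E → ℝ} (hB : IsBase Φ Δ c) (f g : E → ℝ)
    (h : ∑ a ∈ Δ, f a • a = ∑ a ∈ Δ, g a • a) : ∀ a ∈ Δ, f a = g a := by
  have hsub : ∑ a ∈ Δ, (f a - g a) • a = 0 := by
    have hsplit : ∑ a ∈ Δ, (f a - g a) • a
        = (∑ a ∈ Δ, f a • a) - ∑ a ∈ Δ, g a • a := by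
      rw [← Finset.sum_sub_distrib]
      exact Finset.sum_congr rfl fun b _ => sub_smul _ _ _
    rw [hsplit, h, sub_self]
  have h0 := coord_zero hB (fun x => f x - g x) hsub
  intro a ha
  have h1 : f a - g a = 0 := h0 a ha
  linarith

lemma coord_simple {Φ Δ : Finset E} {c : E → E → ℝ} (hB : IsBase Φ Δ c) {a : E} (ha : a ∈ Δ) :
    ∀ b ∈ Δ, c a b = if b = a then 1 else 0 := by
  classical
  have h2 : ∑ b ∈ Δ, (if b = a then (1 : ℝ) else 0) • b = a := by
    simp only [ite_smul, one_smul, zero_smul, Finset.sum_ite_eq', ha, if_true]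
  refine coord_unique hB _ _ ?_
  rw [h2]
  exact (hB.repr a (hB.subset ha)).symm

lemma coord_neg {Φ Δ : Finset E} {c : E → E → ℝ} (hΦ : IsRootSystem Φ) (hB : IsBase Φ Δ c)
    {γ : E} (hγ : γ ∈ Φ) : ∀ b ∈ Δ, c (-γ) b = -c γ b := by
  refine coord_unique hB _ _ ?_
  have h2 : ∑ b ∈ Δ, (-c γ b) • b = -γ := by
    rw [show ∑ b ∈ Δ, (-c γ b) • b = -∑ b ∈ Δ, c γ b • b from by
      rw [← Finset.sum_neg_distrib]; exact Finset.sum_congr rfl fun b _ => by rw [neg_smul]]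
    rw [← hB.repr γ hγ]
  rw [h2]
  exact (hB.repr (-γ) (neg_mem hΦ hγ)).symm

lemma coord_reflect {Φ Δ : Finset E} {c : E → E → ℝ} (hΦ : IsRootSystem Φ) (hB : IsBase Φ Δ c)
    {γ β : E} (hγ : γ ∈ Φ) (hβ : β ∈ Δ) :
    ∀ b ∈ Δ, c (γ - (2 * ⟪γ, β⟫ / ⟪β, β⟫) • β) b
      = c γ b - (if b = β then 2 * ⟪γ, β⟫ / ⟪β, β⟫ else 0) := by
  classical
  refine coord_unique hB _ _ ?_
  have h2 : ∑ b ∈ Δ, (c γ b - (if b = β then 2 * ⟪γ, β⟫ / ⟪β, β⟫ else 0)) • b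
      = γ - (2 * ⟪γ, β⟫ / ⟪β, β⟫) • β := by
    have hsplit : ∑ b ∈ Δ, (c γ b - (if b = β then 2 * ⟪γ, β⟫ / ⟪β, β⟫ else 0)) • b
        = ∑ b ∈ Δ, (c γ b • b - (if b = β then 2 * ⟪γ, β⟫ / ⟪β, β⟫ else 0) • b) :=
      Finset.sum_congr rfl fun b _ => sub_smul _ _ _
    rw [hsplit, Finset.sum_sub_distrib, ← hB.repr γ hγ]
    congr 1
    simp only [ite_smul, zero_smul, Finset.sum_ite_eq', hβ, if_true]
  rw [h2]
  exact (hB.repr _ (hΦ.reflect β (hB.subset hβ) γ hγ)).symm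

lemma coord_int {Φ Δ : Finset E} {c : E → E → ℝ} (hB : IsBase Φ Δ c) {γ a : E}
    (hγ : γ ∈ Φ) (ha : a ∈ Δ) : (⌊c γ a⌋ : ℝ) = c γ a := by
  obtain ⟨n, hn⟩ := hB.int γ hγ a ha
  rw [hn, Int.floor_intCast]

lemma forward {Φ Δ : Finset E} {c : E → E → ℝ}
    (hΦ : IsRootSystem Φ) (hB : IsBase Φ Δ c)
    (L S : ℝ) (p : ℤ) (hSL : S < L)
    (hN : ∀ x ∈ Φ, ∀ a ∈ Φ, ⟪x, x⟫ = L → ⟪a, a⟫ = S →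
      ∃ u m : ℤ, 2 * ⟪x, a⟫ / ⟪a, a⟫ = (u : ℝ) ∧ u = p * m) :
    ∀ n : ℕ, ∀ γ ∈ Φ, ⟪γ, γ⟫ = L → (∀ b ∈ Δ, 0 ≤ c γ b) →
      (∑ b ∈ Δ, ⌊c γ b⌋) = (n : ℤ) → ∀ a ∈ Δ, ⟪a, a⟫ = S →
      ∃ m : ℤ, ⌊c γ a⌋ = p * m := by
  classical
  intro n
  induction n using Nat.strong_induction_on with
  | _ n ih =>
  intro γ hγ hγL hpos hht a ha haS
  by_cases hγΔ : γ ∈ Δ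
  · have hca := coord_simple hB hγΔ a ha
    have hne : a ≠ γ := by
      rintro rfl
      rw [haS] at hγL
      exact absurd hγL (ne_of_lt hSL)
    rw [if_neg hne] at hca
    refine ⟨0, ?_⟩
    rw [hca]
    simp
  · have hexβ : ∃ β ∈ Δ, 0 < ⟪γ, β⟫ := by
      by_contra hcon
      push_neg at hcon
      have hexp : ⟪γ, γ⟫ = ∑ b ∈ Δ, c γ b * ⟪γ, b⟫ := by
        have h0 := congrArg (fun w => (inner ℝ γ w : ℝ)) (hB.repr γ hγ)
        simpa [inner_sum, real_inner_smul_right] using h0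
      have hle : ⟪γ, γ⟫ ≤ 0 := by
        rw [hexp]
        apply Finset.sum_nonpos
        intro b hb
        exact mul_nonpos_iff.mpr (Or.inl ⟨hpos b hb, hcon b hb⟩)
      linarith [root_inner_pos hΦ hγ]
    obtain ⟨β, hβ, hγβ⟩ := hexβ
    have hβΦ : β ∈ Φ := hB.subset hβ
    have hββ := root_inner_pos hΦ hβΦ
    obtain ⟨mβ, hmβ⟩ := hΦ.cry β hβΦ γ hγ
    have hkpos : 0 < 2 * ⟪γ, β⟫ / ⟪β, β⟫ := div_pos (by linarith) hββ
    have hmβ1 : 1 ≤ mβ := by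
      have : (0 : ℝ) < (mβ : ℝ) := by rw [← hmβ]; exact hkpos
      have h0 : 0 < mβ := by exact_mod_cast this
      omega
    have hγ'Φ : γ - (2 * ⟪γ, β⟫ / ⟪β, β⟫) • β ∈ Φ := hΦ.reflect β hβΦ γ hγ
    have hγ'L : ⟪γ - (2 * ⟪γ, β⟫ / ⟪β, β⟫) • β, γ - (2 * ⟪γ, β⟫ / ⟪β, β⟫) • β⟫ = L := by
      rw [reflect_inner_self (ne_of_gt hββ)]
      exact hγL
    have hcoord := coord_reflect hΦ hB hγ hβ
    have hγ'pos : ∀ b ∈ Δ, 0 ≤ c (γ - (2 * ⟪γ, β⟫ / ⟪β, β⟫) • β) b := by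
      rcases hB.sign _ hγ'Φ with h | h
      · exact h
      · exfalso
        have hzero : ∀ b ∈ Δ, b ≠ β → c γ b = 0 := by
          intro b hb hbβ
          have h1 := hcoord b hb
          rw [if_neg hbβ, sub_zero] at h1
          have h2 := h b hb
          rw [h1] at h2
          linarith [hpos b hb]
        have hγeq : γ = c γ β • β := by
          have hs : ∑ b ∈ Δ, c γ b • b = c γ β • β :=
            Finset.sum_eq_single β (fun b hb hbβ => by rw [hzero b hb hbβ, zero_smul])
              (fun hβ' => absurd hβ hβ')
          conv_lhs => rw [hB.repr γ hγ]
          exact hs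
        have hmem : c γ β • β ∈ Φ := hγeq ▸ hγ
        rcases hΦ.reduced β hβΦ _ hmem with h1 | h1
        · rw [h1, one_smul] at hγeq
          exact hγΔ (hγeq ▸ hβ)
        · rw [h1, neg_one_smul] at hγeq
          rw [hγeq, inner_neg_left] at hγβ
          linarith
    have hfloorrel : ∀ b ∈ Δ,
        ⌊c (γ - (2 * ⟪γ, β⟫ / ⟪β, β⟫) • β) b⌋ = ⌊c γ b⌋ - (if b = β then mβ else 0) := by
      intro b hb
      have h1 := hcoord b hb
      have hcast : (⌊c (γ - (2 * ⟪γ, β⟫ / ⟪β, β⟫) • β) b⌋ : ℝ)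
          = ((⌊c γ b⌋ - (if b = β then mβ else 0) : ℤ) : ℝ) := by
        rw [coord_int hB hγ'Φ hb, h1]
        push_cast
        rw [coord_int hB hγ hb]
        split_ifs with hcase
        · rw [hmβ]
        · simp
      exact_mod_cast hcast
    have hht' : ∑ b ∈ Δ, ⌊c (γ - (2 * ⟪γ, β⟫ / ⟪β, β⟫) • β) b⌋ = (n : ℤ) - mβ := by
      rw [Finset.sum_congr rfl hfloorrel, Finset.sum_sub_distrib, hht,
        Finset.sum_ite_eq', if_pos hβ]
    have hhtnn : 0 ≤ ∑ b ∈ Δ, ⌊c (γ - (2 * ⟪γ, β⟫ / ⟪β, β⟫) • β) b⌋ := by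
      apply Finset.sum_nonneg
      intro b hb
      have h1 := hγ'pos b hb
      exact Int.floor_nonneg.mpr h1
    have hn'cast : (∑ b ∈ Δ, ⌊c (γ - (2 * ⟪γ, β⟫ / ⟪β, β⟫) • β) b⌋)
        = (((∑ b ∈ Δ, ⌊c (γ - (2 * ⟪γ, β⟫ / ⟪β, β⟫) • β) b⌋).toNat : ℕ) : ℤ) :=
      (Int.toNat_of_nonneg hhtnn).symm
    have hn'lt : (∑ b ∈ Δ, ⌊c (γ - (2 * ⟪γ, β⟫ / ⟪β, β⟫) • β) b⌋).toNat < n := by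
      omega
    obtain ⟨m, hm⟩ := ih _ hn'lt _ hγ'Φ hγ'L hγ'pos hn'cast a ha haS
    have hrel := hfloorrel a ha
    by_cases hab : a = β
    · subst hab
      obtain ⟨u, m2, hu1, hu2⟩ := hN γ hγ a (hB.subset ha) hγL haS
      have hueq : u = mβ := by
        have : (u : ℝ) = (mβ : ℝ) := by rw [← hu1, ← hmβ]
        exact_mod_cast this
      rw [hueq] at hu2
      rw [if_pos rfl] at hrel
      refine ⟨m + m2, ?_⟩
      have : ⌊c γ a⌋ = p * m + p * m2 := by
        rw [← hm, ← hu2]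
        linarith [hrel]
      rw [this]
      ring
    · rw [if_neg hab] at hrel
      refine ⟨m, ?_⟩
      rw [← hm]
      omega

lemma lattice {Φ : Finset E} (hΦ : IsRootSystem Φ) (L : ℝ) :
    ∀ x ∈ AddSubgroup.closure {z : E | z ∈ Φ ∧ ⟪z, z⟫ = L},
      (∀ y ∈ AddSubgroup.closure {z : E | z ∈ Φ ∧ ⟪z, z⟫ = L}, ∃ k : ℤ, 2 * ⟪x, y⟫ = k * L) ∧
      ∃ k : ℤ, ⟪x, x⟫ = k * L := by
  have hbil : ∀ w, w ∈ Φ → ⟪w, w⟫ = L →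
      ∀ y ∈ AddSubgroup.closure {z : E | z ∈ Φ ∧ ⟪z, z⟫ = L}, ∃ k : ℤ, 2 * ⟪w, y⟫ = k * L := by
    intro w hw hwL y hy
    induction hy using AddSubgroup.closure_induction with
    | mem z hz =>
      obtain ⟨hzΦ, hzL⟩ := hz
      obtain ⟨nz, hnz⟩ := hΦ.cry z hzΦ w hw
      refine ⟨nz, ?_⟩
      rw [div_eq_iff (ne_of_gt (root_inner_pos hΦ hzΦ))] at hnz
      rw [hnz, hzL]
    | zero => exact ⟨0, by simp⟩
    | add y1 y2 h1 h2 ih1 ih2 =>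
      obtain ⟨k1, hk1⟩ := ih1
      obtain ⟨k2, hk2⟩ := ih2
      refine ⟨k1 + k2, ?_⟩
      rw [inner_add_right]
      push_cast
      linarith
    | neg y1 h1 ih1 =>
      obtain ⟨k, hk⟩ := ih1
      refine ⟨-k, ?_⟩
      rw [inner_neg_right]
      push_cast
      linarith
  intro x hx
  induction hx using AddSubgroup.closure_induction with
  | mem z hz => exact ⟨hbil z hz.1 hz.2, ⟨1, by rw [hz.2]; push_cast; ring⟩⟩
  | zero => exact ⟨fun y hy => ⟨0, by simp⟩, ⟨0, by simp⟩⟩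
  | add x1 x2 hx1 hx2 ih1 ih2 =>
    constructor
    · intro y hy
      obtain ⟨k1, h1⟩ := ih1.1 y hy
      obtain ⟨k2, h2⟩ := ih2.1 y hy
      refine ⟨k1 + k2, ?_⟩
      rw [inner_add_left]
      push_cast
      linarith
    · obtain ⟨k1, h1⟩ := ih1.2
      obtain ⟨k2, h2⟩ := ih2.2
      obtain ⟨k3, h3⟩ := ih1.1 x2 hx2
      refine ⟨k1 + k2 + k3, ?_⟩
      have hexp : ⟪x1 + x2, x1 + x2⟫ = ⟪x1, x1⟫ + ⟪x2, x2⟫ + 2 * ⟪x1, x2⟫ := by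
        rw [inner_add_left, inner_add_right, inner_add_right, real_inner_comm x1 x2]
        ring
      rw [hexp]
      push_cast
      linarith
  | neg x1 hx1 ih1 =>
    constructor
    · intro y hy
      obtain ⟨k, h⟩ := ih1.1 y hy
      refine ⟨-k, ?_⟩
      rw [inner_neg_left]
      push_cast
      linarith
    · obtain ⟨k, h⟩ := ih1.2
      refine ⟨k, ?_⟩
      rw [inner_neg_neg]
      exact h

end Stmt11Helpers

/-- A root is long iff its coordinate on every short simple root is an integer multiple
of the lacing number `ℓ` of `Φ`. -/
theorem stmt11 (Φ Δ : Finset E) (c : E → E → ℝ)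
    (hΦ : IsRootSystem Φ) (hB : IsBase Φ Δ c) (hirr : IsIrredSys Φ)
    (ℓ : ℝ)
    (hlace : IsGreatest {r : ℝ | ∃ x ∈ Φ, ∃ y ∈ Φ, r = ⟪x, x⟫ / ⟪y, y⟫} ℓ)
    (γ : E) (hγ : γ ∈ Φ) :
    (∀ δ ∈ Φ, ‖δ‖ ≤ ‖γ‖) ↔
      (∀ a ∈ Δ, (∃ δ ∈ Φ, ‖a‖ < ‖δ‖) → ∃ n : ℤ, c γ a = ℓ * (n : ℝ)) := by
  classical
  have hΦne : Φ.Nonempty := ⟨γ, hγ⟩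
  obtain ⟨γL, hγL, hmax⟩ := Φ.exists_max_image (fun x => ⟪x, x⟫) hΦne
  obtain ⟨γS, hγS, hmin⟩ := Φ.exists_min_image (fun x => ⟪x, x⟫) hΦne
  have hSpos : 0 < ⟪γS, γS⟫ := Stmt11Helpers.root_inner_pos hΦ hγS
  have hLpos : 0 < ⟪γL, γL⟫ := Stmt11Helpers.root_inner_pos hΦ hγL
  have hSleL : ⟪γS, γS⟫ ≤ ⟪γL, γL⟫ := hmin γL hγL
  have hℓ : ℓ = ⟪γL, γL⟫ / ⟪γS, γS⟫ := by
    apply hlace.unique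
    constructor
    · exact ⟨γL, hγL, γS, hγS, rfl⟩
    · rintro r ⟨x, hx, y, hy, rfl⟩
      exact div_le_div₀ (le_of_lt hLpos) (hmax x hx) hSpos (hmin y hy)
  have hni : ∀ u v : E, ‖u‖ ≤ ‖v‖ ↔ ⟪u, u⟫ ≤ ⟪v, v⟫ := by
    intro u v
    rw [real_inner_self_eq_norm_mul_norm, real_inner_self_eq_norm_mul_norm]
    constructor
    · intro h
      exact mul_le_mul h h (norm_nonneg u) (norm_nonneg v)
    · intro h
      by_contra hc
      push_neg at hc
      nlinarith [norm_nonneg u, norm_nonneg v]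
  have hnis : ∀ u v : E, ‖u‖ < ‖v‖ ↔ ⟪u, u⟫ < ⟪v, v⟫ := by
    intro u v
    rw [lt_iff_not_ge, lt_iff_not_ge, hni v u]
  have hlong : (∀ δ ∈ Φ, ‖δ‖ ≤ ‖γ‖) ↔ ⟪γ, γ⟫ = ⟪γL, γL⟫ := by
    constructor
    · intro h
      exact le_antisymm (hmax γ hγ) ((hni γL γ).mp (h γL hγL))
    · intro h δ hδ
      rw [hni δ γ, h]
      exact hmax δ hδ
  by_cases hLS : ⟪γL, γL⟫ = ⟪γS, γS⟫
  · have hall : ∀ x ∈ Φ, ⟪x, x⟫ = ⟪γL, γL⟫ :=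
      fun x hx => le_antisymm (hmax x hx) (hLS ▸ hmin x hx)
    constructor
    · intro _ a ha hsh
      exfalso
      obtain ⟨δ, hδ, hlt⟩ := hsh
      rw [hnis a δ] at hlt
      rw [hall a (hB.subset ha), hall δ hδ] at hlt
      exact lt_irrefl _ hlt
    · intro _ δ hδ
      rw [hni δ γ, hall δ hδ, hall γ hγ]
  · have hSltL : ⟪γS, γS⟫ < ⟪γL, γL⟫ := lt_of_le_of_ne hSleL (fun h => hLS h.symm)
    obtain ⟨z0, hz0Φ, hz0len, hz0ne⟩ := Stmt11Helpers.orbit hΦ hirr hγL hγS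
    obtain ⟨p, hp23, hpL, hpN⟩ := Stmt11Helpers.ratio hΦ hz0Φ hγS
      (by rw [hz0len]; exact hSltL) hz0ne
    have hLpS : ⟪γL, γL⟫ = (p : ℝ) * ⟪γS, γS⟫ := by rw [← hz0len]; exact hpL
    have hℓp : ℓ = (p : ℝ) := by
      rw [hℓ, hLpS]
      field_simp
    have h2len : ∀ x ∈ Φ, ⟪x, x⟫ = ⟪γL, γL⟫ ∨ ⟪x, x⟫ = ⟪γS, γS⟫ := by
      intro x hx
      by_contra hcon
      push_neg at hcon
      obtain ⟨hxL, hxS⟩ := hcon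
      have hx1 : ⟪x, x⟫ < ⟪γL, γL⟫ := lt_of_le_of_ne (hmax x hx) hxL
      have hx2 : ⟪γS, γS⟫ < ⟪x, x⟫ := lt_of_le_of_ne (hmin x hx) (Ne.symm hxS)
      obtain ⟨z1, hz1Φ, hz1len, hz1ne⟩ := Stmt11Helpers.orbit hΦ hirr hγL hx
      obtain ⟨p1, hp1, hp1L, _⟩ := Stmt11Helpers.ratio hΦ hz1Φ hx
        (by rw [hz1len]; exact hx1) hz1ne
      obtain ⟨z2, hz2Φ, hz2len, hz2ne⟩ := Stmt11Helpers.orbit hΦ hirr hγS hx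
      obtain ⟨p2, hp2, hp2L, _⟩ := Stmt11Helpers.ratio hΦ hx hz2Φ
        (by rw [hz2len]; exact hx2) (by rw [real_inner_comm]; exact hz2ne)
      rw [hz1len] at hp1L
      rw [hz2len] at hp2L
      rcases hp23 with rfl | rfl <;> rcases hp1 with rfl | rfl <;> rcases hp2 with rfl | rfl <;>
        push_cast at hLpS hp1L hp2L <;> nlinarith [hSpos, hx2]
    have hqp_of : ∀ q : ℤ, ⟪γL, γL⟫ = (q : ℝ) * ⟪γS, γS⟫ → q = p := by
      intro q hq
      have h1 : (q : ℝ) * ⟪γS, γS⟫ = (p : ℝ) * ⟪γS, γS⟫ := by rw [← hq, hLpS]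
      have h2 := mul_right_cancel₀ (ne_of_gt hSpos) h1
      exact_mod_cast h2
    have hN : ∀ x ∈ Φ, ∀ a ∈ Φ, ⟪x, x⟫ = ⟪γL, γL⟫ → ⟪a, a⟫ = ⟪γS, γS⟫ →
        ∃ u m : ℤ, 2 * ⟪x, a⟫ / ⟪a, a⟫ = (u : ℝ) ∧ u = p * m := by
      intro x hx a ha hxL haS
      by_cases hxa : ⟪x, a⟫ = 0
      · obtain ⟨u, hu⟩ := hΦ.cry a ha x hx
        have hu0 : (u : ℝ) = 0 := by rw [← hu, hxa]; simp
        have hu0' : u = 0 := by exact_mod_cast hu0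
        exact ⟨u, 0, hu, by rw [hu0', mul_zero]⟩
      · obtain ⟨q, hq23, hqL, hqN⟩ := Stmt11Helpers.ratio hΦ hx ha
          (by rw [haS, hxL]; exact hSltL) hxa
        have hqp : q = p := hqp_of q (by rw [← hxL, hqL, haS])
        rcases hqN with h | h
        · exact ⟨q, 1, h, by rw [hqp, mul_one]⟩
        · refine ⟨-q, -1, ?_, by rw [hqp]; ring⟩
          rw [h]
          push_cast
          ring
    have hshort : ∀ a ∈ Φ, ((∃ δ ∈ Φ, ‖a‖ < ‖δ‖) ↔ ⟪a, a⟫ = ⟪γS, γS⟫) := by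
      intro a ha
      constructor
      · rintro ⟨δ, hδ, hlt⟩
        rcases h2len a ha with h | h
        · exfalso
          rw [hnis a δ] at hlt
          rw [h] at hlt
          linarith [hmax δ hδ]
        · exact h
      · intro h
        refine ⟨γL, hγL, ?_⟩
        rw [hnis a γL, h]
        exact hSltL
    rw [hlong]
    constructor
    · intro hγL' a ha hsh
      have haS : ⟪a, a⟫ = ⟪γS, γS⟫ := (hshort a (hB.subset ha)).mp hsh
      rcases hB.sign γ hγ with hposγ | hnegγ
      · have hh0 : 0 ≤ ∑ b ∈ Δ, ⌊c γ b⌋ :=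
          Finset.sum_nonneg fun b hb => Int.floor_nonneg.mpr (hposγ b hb)
        obtain ⟨m, hm⟩ := Stmt11Helpers.forward hΦ hB _ _ p hSltL hN
          (∑ b ∈ Δ, ⌊c γ b⌋).toNat γ hγ hγL' hposγ (Int.toNat_of_nonneg hh0).symm a ha haS
        refine ⟨m, ?_⟩
        rw [← Stmt11Helpers.coord_int hB hγ ha, hm, hℓp]
        push_cast
        ring
      · have hnγ : -γ ∈ Φ := Stmt11Helpers.neg_mem hΦ hγ
        have hnγL : ⟪-γ, -γ⟫ = ⟪γL, γL⟫ := by rw [inner_neg_neg]; exact hγL'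
        have hnpos : ∀ b ∈ Δ, 0 ≤ c (-γ) b := by
          intro b hb
          rw [Stmt11Helpers.coord_neg hΦ hB hγ b hb]
          linarith [hnegγ b hb]
        have hh0 : 0 ≤ ∑ b ∈ Δ, ⌊c (-γ) b⌋ :=
          Finset.sum_nonneg fun b hb => Int.floor_nonneg.mpr (hnpos b hb)
        obtain ⟨m, hm⟩ := Stmt11Helpers.forward hΦ hB _ _ p hSltL hN
          (∑ b ∈ Δ, ⌊c (-γ) b⌋).toNat (-γ) hnγ hnγL hnpos (Int.toNat_of_nonneg hh0).symm a ha haS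
        refine ⟨-m, ?_⟩
        have hcn := Stmt11Helpers.coord_neg hΦ hB hγ a ha
        rw [hcn] at hm
        have h1 : (⌊-c γ a⌋ : ℝ) = -c γ a := by
          rw [← hcn]
          exact Stmt11Helpers.coord_int hB hnγ ha
        have h2 : c γ a = -((⌊-c γ a⌋ : ℝ)) := by linarith
        rw [h2, hm, hℓp]
        push_cast
        ring
    · intro hdiv
      by_contra hcon
      have hγS' : ⟪γ, γ⟫ = ⟪γS, γS⟫ := (h2len γ hγ).resolve_left hcon
      have hγQL : γ ∈ AddSubgroup.closure {z : E | z ∈ Φ ∧ ⟪z, z⟫ = ⟪γL, γL⟫} := by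
        have hsum : ∑ b ∈ Δ, c γ b • b
            ∈ AddSubgroup.closure {z : E | z ∈ Φ ∧ ⟪z, z⟫ = ⟪γL, γL⟫} := by
          refine AddSubgroup.sum_mem _ ?_
          intro b hb
          rcases h2len b (hB.subset hb) with hbL | hbS
          · have heq : c γ b • b = (⌊c γ b⌋ : ℤ) • b := by
              conv_lhs => rw [← Stmt11Helpers.coord_int hB hγ hb]
              rw [Int.cast_smul_eq_zsmul]
            have hbQ : b ∈ AddSubgroup.closure {z : E | z ∈ Φ ∧ ⟪z, z⟫ = ⟪γL, γL⟫} :=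
              AddSubgroup.subset_closure
                (show b ∈ {z : E | z ∈ Φ ∧ ⟪z, z⟫ = ⟪γL, γL⟫} from ⟨hB.subset hb, hbL⟩)
            rw [heq]
            exact AddSubgroup.zsmul_mem _ hbQ _
          · have hsh : ∃ δ ∈ Φ, ‖b‖ < ‖δ‖ := (hshort b (hB.subset hb)).mpr hbS
            obtain ⟨nb, hnb⟩ := hdiv b hb hsh
            obtain ⟨zb, hzbΦ, hzbL, hzbne⟩ := Stmt11Helpers.orbit hΦ hirr hγL (hB.subset hb)
            obtain ⟨q, hq23, hqL, hqN⟩ := Stmt11Helpers.ratio hΦ hzbΦ (hB.subset hb)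
              (by rw [hbS, hzbL]; exact hSltL) hzbne
            have hqp : q = p := hqp_of q (by rw [← hzbL, hqL, hbS])
            have hrefl : zb - (2 * ⟪zb, b⟫ / ⟪b, b⟫) • b ∈ Φ :=
              hΦ.reflect b (hB.subset hb) zb hzbΦ
            have hreflL : ⟪zb - (2 * ⟪zb, b⟫ / ⟪b, b⟫) • b,
                zb - (2 * ⟪zb, b⟫ / ⟪b, b⟫) • b⟫ = ⟪γL, γL⟫ := by
              rw [Stmt11Helpers.reflect_inner_self
                (ne_of_gt (Stmt11Helpers.root_inner_pos hΦ (hB.subset hb)))]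
              exact hzbL
            have hℓb : ℓ • b ∈ AddSubgroup.closure {z : E | z ∈ Φ ∧ ⟪z, z⟫ = ⟪γL, γL⟫} := by
              rcases hqN with h | h
              · have heq : ℓ • b = zb - (zb - (2 * ⟪zb, b⟫ / ⟪b, b⟫) • b) := by
                  rw [sub_sub_cancel, h, hqp, hℓp]
                rw [heq]
                exact AddSubgroup.sub_mem _
                  (AddSubgroup.subset_closure
                    (show zb ∈ {z : E | z ∈ Φ ∧ ⟪z, z⟫ = ⟪γL, γL⟫} from ⟨hzbΦ, hzbL⟩))
                  (AddSubgroup.subset_closure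
                    (show zb - (2 * ⟪zb, b⟫ / ⟪b, b⟫) • b ∈ {z : E | z ∈ Φ ∧ ⟪z, z⟫ = ⟪γL, γL⟫}
                      from ⟨hrefl, hreflL⟩))
              · have heq : ℓ • b = -(zb - (zb - (2 * ⟪zb, b⟫ / ⟪b, b⟫) • b)) := by
                  rw [sub_sub_cancel, h, hqp, hℓp, ← neg_smul, neg_neg]
                rw [heq]
                exact AddSubgroup.neg_mem _ (AddSubgroup.sub_mem _
                  (AddSubgroup.subset_closure
                    (show zb ∈ {z : E | z ∈ Φ ∧ ⟪z, z⟫ = ⟪γL, γL⟫} from ⟨hzbΦ, hzbL⟩))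
                  (AddSubgroup.subset_closure
                    (show zb - (2 * ⟪zb, b⟫ / ⟪b, b⟫) • b ∈ {z : E | z ∈ Φ ∧ ⟪z, z⟫ = ⟪γL, γL⟫}
                      from ⟨hrefl, hreflL⟩)))
            have heq2 : c γ b • b = (nb : ℤ) • (ℓ • b) := by
              rw [hnb, mul_comm, ← smul_smul, Int.cast_smul_eq_zsmul]
            rw [heq2]
            exact AddSubgroup.zsmul_mem _ hℓb _
        rwa [← hB.repr γ hγ] at hsum
      obtain ⟨k, hk⟩ := (Stmt11Helpers.lattice hΦ (⟪γL, γL⟫) γ hγQL).2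
      rw [hγS'] at hk
      have hk0 : (0 : ℝ) < (k : ℝ) * ⟪γL, γL⟫ := hk ▸ hSpos
      have hkpos : (0 : ℝ) < (k : ℝ) := by
        by_contra hc
        push_neg at hc
        nlinarith
      have hk1 : (1 : ℝ) ≤ (k : ℝ) := by
        have : 0 < k := by exact_mod_cast hkpos
        exact_mod_cast this
      nlinarith [hSltL, hk]
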